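/- Let (W, R) be a pair of random variables with a joint Lebesgue density, where W takes values in [0,1], and suppose R lies in the domain of attraction of a generalized Pareto distribution with shape λ: there are functions a(t) > 0 and b(t) = F_R^{−1}(1 − 1/t) (the 1 − 1/t quantile of R, strictly increasing in t to the upper endpoint of R) such that lim_{t→∞} P{R > a(t)r + b(t)} / P{R > b(t)} = K̄(r) = (1 + λr)₊^{−1/λ} for all r ≥ 0. Suppose further that for each w ∈ [0,1] the limit of the conditional probability P{W ≤ w | R = b(t)} as t → ∞ exists. Then, for a distribution function J on [0,1]: lim_{t→∞} P{W ≤ w, R > a(t)r + b(t) | R > b(t)} = J(w)·K̄(r) for all w ∈ [0,1] and r ≥ 0 if and only if lim_{t→∞} P{W ≤ w | R = b(t)} = J(w) for all w ∈ [0,1]. -/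

import Mathlib

open MeasureTheory Filter Set

noncomputable section

/-- The GP(1,λ) survivor function `(1 + λr)₊^{−1/λ}`, interpreted as `e^{−r}`
when `λ = 0`. -/
def gpTail (l r : ℝ) : ℝ :=
  if l = 0 then Real.exp (-r) else (max (1 + l * r) 0) ^ (-1 / l)

/-- The marginal density of `R`, from the joint density `f(r, w)` of `(R, W)`. -/
def fR (f : ℝ → ℝ → ℝ) (r : ℝ) : ℝ := ∫ w, f r w

/-- `P(R > x)`. -/
def SR (f : ℝ → ℝ → ℝ) (x : ℝ) : ℝ := ∫ r in Set.Ioi x, fR f r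

/-- `P(W ≤ w, R > x)`. -/
def jointP (f : ℝ → ℝ → ℝ) (w x : ℝ) : ℝ :=
  ∫ r in Set.Ioi x, ∫ v in Set.Iic w, f r v

/-- The conditional probability `P(W ≤ w | R = r)`. -/
def condP (f : ℝ → ℝ → ℝ) (w r : ℝ) : ℝ := (∫ v in Set.Iic w, f r v) / fR f r

variable {f : ℝ → ℝ → ℝ}

lemma fR_nonneg (hf : ∀ r w, 0 ≤ f r w) (r : ℝ) : 0 ≤ fR f r :=
  integral_nonneg (hf r)

lemma fR_meas (hf : Measurable (Function.uncurry f)) : Measurable (fR f) :=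
  (hf.stronglyMeasurable.integral_prod_right).measurable

lemma fR_int (hf : Integrable (Function.uncurry f)
    ((volume : Measure ℝ).prod (volume : Measure ℝ))) : Integrable (fR f) := by
  have := hf.integral_prod_left
  exact this

lemma SR_nonneg (hf : ∀ r w, 0 ≤ f r w) (x : ℝ) : 0 ≤ SR f x :=
  setIntegral_nonneg measurableSet_Ioi fun r _ => fR_nonneg hf r

lemma SR_split (hint : Integrable (fR f)) {x y : ℝ} (hxy : x ≤ y) :
    SR f x = (∫ s in Set.Ioc x y, fR f s) + SR f y := by
  rw [SR, ← Set.Ioc_union_Ioi_eq_Ioi hxy,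
    setIntegral_union (Set.Ioc_disjoint_Ioi le_rfl) measurableSet_Ioi
      hint.integrableOn hint.integrableOn]
  rfl

lemma SR_anti (hf : ∀ r w, 0 ≤ f r w) (hint : Integrable (fR f)) : Antitone (SR f) := by
  intro x y hxy
  rw [SR_split hint hxy]
  have : 0 ≤ ∫ s in Set.Ioc x y, fR f s :=
    setIntegral_nonneg measurableSet_Ioc fun r _ => fR_nonneg hf r
  linarith


lemma SR_cont (hm : Measurable (fR f)) (hint : Integrable (fR f)) :
    Continuous (SR f) := by
  rw [continuous_iff_continuousAt]
  intro x0
  have h : ∀ x : ℝ, SR f x = ∫ s, (Set.Ioi x).indicator (fR f) s := by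
    intro x
    rw [integral_indicator measurableSet_Ioi]; rfl
  have hfun : SR f = fun x => ∫ s, (Set.Ioi x).indicator (fR f) s := funext h
  rw [ContinuousAt, hfun]
  apply tendsto_integral_filter_of_dominated_convergence (fun s => |fR f s|)
  · exact Eventually.of_forall fun x =>
      ((hm.indicator measurableSet_Ioi).stronglyMeasurable).aestronglyMeasurable
  · refine Eventually.of_forall fun x => Eventually.of_forall fun s => ?_
    by_cases hs : s ∈ Set.Ioi x
    · simp [Set.indicator_of_mem hs, abs_nonneg]
    · simp [Set.indicator_of_notMem hs, abs_nonneg]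
  · exact hint.abs
  · have : ∀ᵐ s : ℝ, s ≠ x0 := by
      have : (volume : Measure ℝ) {x0} = 0 := measure_singleton x0
      exact (ae_iff.2 (by simpa using this))
    filter_upwards [this] with s hs
    rcases lt_or_gt_of_ne hs with h1 | h1
    · -- s < x0 : eventually indicator = 0
      have : ∀ᶠ x in nhds x0, (Set.Ioi x).indicator (fR f) s = (Set.Ioi x0).indicator (fR f) s := by
        have hx : ∀ᶠ x in nhds x0, s < x := eventually_gt_nhds h1
        filter_upwards [hx] with x hx
        simp [Set.indicator_of_notMem, hx.not_gt, not_lt.2 hx.le, Set.mem_Ioi, not_lt.2 h1.le]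
      exact Tendsto.congr' (this.mono fun x hx => hx.symm) tendsto_const_nhds
    · have : ∀ᶠ x in nhds x0, (Set.Ioi x).indicator (fR f) s = (Set.Ioi x0).indicator (fR f) s := by
        have hx : ∀ᶠ x in nhds x0, x < s := eventually_lt_nhds h1
        filter_upwards [hx] with x hx
        simp [Set.indicator_of_mem, Set.mem_Ioi.2 hx, Set.mem_Ioi.2 h1]
      exact Tendsto.congr' (this.mono fun x hx => hx.symm) tendsto_const_nhds


lemma ae_not_mem {N : Set ℝ} (h : (volume : Measure ℝ) N = 0) : ∀ᵐ s : ℝ, s ∉ N := by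
  rw [ae_iff]; simpa [not_not] using h

lemma null_inter (hf : ∀ r w, 0 ≤ f r w) (hint : Integrable (fR f))
    {S : Set ℝ} (hS : MeasurableSet S) (h0 : ∫ s in S, fR f s = 0) :
    (volume : Measure ℝ) ({s | 0 < fR f s} ∩ S) = 0 := by
  have h1 : fR f =ᵐ[(volume : Measure ℝ).restrict S] 0 :=
    (setIntegral_eq_zero_iff_of_nonneg_ae
      (Eventually.of_forall fun s => fR_nonneg hf s) hint.integrableOn).mp h0
  have h2 : ∀ᵐ s ∂(volume : Measure ℝ).restrict S, fR f s = 0 := h1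
  rw [ae_restrict_iff' hS] at h2
  rw [ae_iff] at h2
  refine measure_mono_null (fun s hs => ?_) h2
  simp only [mem_setOf_eq, not_forall, exists_prop] at hs ⊢
  exact ⟨hs.2, hs.1.ne'⟩

/-- the set of `s` in a flat part of `SR` at the level of a rational `q < s`,
with `fR s > 0`, is null. -/
lemma C_null (hf : ∀ r w, 0 ≤ f r w) (hm : Measurable (fR f)) (hint : Integrable (fR f))
    (q : ℚ) :
    (volume : Measure ℝ) {s | (q:ℝ) < s ∧ SR f s = SR f (q:ℝ) ∧ 0 < fR f s} = 0 := by
  set C := {s | (q:ℝ) < s ∧ SR f s = SR f (q:ℝ) ∧ 0 < fR f s} with hC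
  rcases C.eq_empty_or_nonempty with h | hne
  · simp [h]
  by_cases hbd : BddAbove C
  · set m := sSup C with hm'
    have hmem : m ∈ closure C := csSup_mem_closure hne hbd
    have hSRm : SR f m = SR f (q:ℝ) := by
      have hcl : closure C ⊆ {s | SR f s = SR f (q:ℝ)} :=
        closure_minimal (fun s hs => hs.2.1)
          (isClosed_singleton.preimage (SR_cont hm hint))
      exact hcl hmem
    obtain ⟨s0, hs0⟩ := hne
    have hqm : (q:ℝ) ≤ m := hs0.1.le.trans (le_csSup hbd hs0)
    have h0 : ∫ s in Set.Ioc (q:ℝ) m, fR f s = 0 := by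
      have := SR_split hint hqm
      rw [hSRm] at this; linarith
    refine measure_mono_null (fun s hs => ?_) (null_inter hf hint measurableSet_Ioc h0)
    exact ⟨hs.2.2, hs.1, le_csSup hbd hs⟩
  · have key : ∀ n : ℕ, (volume : Measure ℝ) ({s | 0 < fR f s} ∩ Set.Ioc (q:ℝ) n) = 0 := by
      intro n
      obtain ⟨s, hs, hns⟩ := not_bddAbove_iff.mp hbd (n : ℝ)
      have h0 : ∫ x in Set.Ioc (q:ℝ) s, fR f x = 0 := by
        have := SR_split hint hs.1.le
        rw [hs.2.1] at this; linarith
      exact measure_mono_null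
        (inter_subset_inter_right _ (Set.Ioc_subset_Ioc_right hns.le))
        (null_inter hf hint measurableSet_Ioc h0)
    have hsub : C ⊆ ⋃ n : ℕ, ({s | 0 < fR f s} ∩ Set.Ioc (q:ℝ) n) := by
      intro s hs
      obtain ⟨n, hn⟩ := exists_nat_gt s
      exact mem_iUnion.2 ⟨n, hs.2.2, hs.1, hn.le⟩
    exact measure_mono_null hsub (measure_iUnion_null key)

lemma E0_null (hf : ∀ r w, 0 ≤ f r w) (hint : Integrable (fR f)) :
    (volume : Measure ℝ)
    {s | SR f s = 0 ∧ ∀ q : ℚ, (q:ℝ) < s → SR f (q:ℝ) ≠ 0} = 0 := by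
  refine Set.Countable.measure_zero (Set.Subsingleton.countable fun s1 h1 s2 h2 => ?_) _
  by_contra hne
  wlog hlt : s1 < s2 generalizing s1 s2
  · exact this s2 h2 s1 h1 (Ne.symm hne) ((Ne.lt_or_gt hne).resolve_left hlt)
  obtain ⟨qq, hq1, hq2⟩ := exists_rat_btwn hlt
  have h3 : SR f (qq:ℝ) ≤ SR f s1 := SR_anti hf hint hq1.le
  have h4 : 0 ≤ SR f (qq:ℝ) := SR_nonneg hf _
  exact h2.2 qq hq2 (le_antisymm (h1.1 ▸ h3) h4)

lemma E_null (hf : ∀ r w, 0 ≤ f r w) (hint : Integrable (fR f)) (b : ℝ → ℝ) (x0 : ℝ)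
    (hlt : ∀ s, (x0 < s ∧ 0 < fR f s ∧ 0 < SR f s ∧ b (1 / SR f s) ≠ s ∧
      ∀ q : ℚ, (q:ℝ) < s → SR f (q:ℝ) ≠ SR f s) → s < b (1 / SR f s) ∧
        SR f (b (1 / SR f s)) = SR f s) :
    (volume : Measure ℝ) {s | x0 < s ∧ 0 < fR f s ∧ 0 < SR f s ∧ b (1 / SR f s) ≠ s ∧
      ∀ q : ℚ, (q:ℝ) < s → SR f (q:ℝ) ≠ SR f s} = 0 := by
  set E := {s | x0 < s ∧ 0 < fR f s ∧ 0 < SR f s ∧ b (1 / SR f s) ≠ s ∧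
      ∀ q : ℚ, (q:ℝ) < s → SR f (q:ℝ) ≠ SR f s} with hE
  refine Set.Countable.measure_zero ?_ _
  rw [Set.countable_iff_exists_injOn]
  classical
  set Q : ℝ → ℚ := fun s =>
    if h : ∃ q : ℚ, s < (q:ℝ) ∧ (q:ℝ) < b (1 / SR f s) then h.choose else 0 with hQ
  have hQspec : ∀ s ∈ E, s < (Q s : ℝ) ∧ (Q s : ℝ) < b (1 / SR f s) := by
    intro s hs
    have h := (hlt s hs).1
    obtain ⟨q, hq⟩ := exists_rat_btwn h
    have hex : ∃ q : ℚ, s < (q:ℝ) ∧ (q:ℝ) < b (1 / SR f s) := ⟨q, hq⟩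
    simp only [hQ, dif_pos hex]
    exact hex.choose_spec
  have hinj : ∀ s1 ∈ E, ∀ s2 ∈ E, s1 < s2 → Q s1 ≠ Q s2 := by
    intro s1 h1 s2 h2 hlt12 heq'
    have hSRne : SR f s1 ≠ SR f s2 := by
      intro hSReq
      obtain ⟨q, hq1, hq2⟩ := exists_rat_btwn hlt12
      refine h2.2.2.2.2 q hq2 ?_
      have ha := SR_anti hf hint (le_of_lt hq1)
      have hb' := SR_anti hf hint (le_of_lt hq2)
      rw [← hSReq] at hb' ⊢
      linarith
    have hSRlt : SR f s2 < SR f s1 :=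
      lt_of_le_of_ne (SR_anti hf hint hlt12.le) (Ne.symm hSRne)
    have hb1 : b (1 / SR f s1) < s2 := by
      by_contra hge
      push_neg at hge
      have := SR_anti hf hint hge
      rw [(hlt s1 h1).2] at this
      linarith
    have hA := (hQspec s1 h1).2
    have hB := (hQspec s2 h2).1
    have hlt' : (Q s1 : ℝ) < (Q s2 : ℝ) := by linarith
    rw [heq'] at hlt'
    exact lt_irrefl _ hlt'
  refine ⟨fun s => Encodable.encode (Q s), fun s1 h1 s2 h2 heq => ?_⟩
  have heq' : Q s1 = Q s2 := Encodable.encode_injective heq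
  by_contra hne
  rcases Ne.lt_or_gt hne with h | h
  · exact hinj s1 h1 s2 h2 h heq'
  · exact hinj s2 h2 s1 h1 h heq'.symm

lemma lemA (hf_meas : Measurable (Function.uncurry f)) (hf_nonneg : ∀ r w, 0 ≤ f r w)
    (hf_int : Integrable (Function.uncurry f)
      ((volume : Measure ℝ).prod (volume : Measure ℝ)))
    (b : ℝ → ℝ) (hb_q : ∀ t : ℝ, 1 < t → SR f (b t) = 1 / t)
    (w c ε T : ℝ) (hT : 1 < T)
    (hTc : ∀ u, T ≤ u → |condP f w (b u) - c| ≤ ε) :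
    ∀ᵐ s : ℝ, s ∈ Set.Ioi (b T) →
      |(∫ v in Set.Iic w, f s v) - c * fR f s| ≤ ε * fR f s := by
  have hm := fR_meas hf_meas
  have hint := fR_int hf_int
  have hIa : ∀ᵐ s : ℝ, Integrable (f s) := by
    have := hf_int.prod_right_ae
    simpa [Function.uncurry] using this
  have hE0 := ae_not_mem (E0_null hf_nonneg hint)
  have hD : ∀ᵐ s : ℝ, ∀ q : ℚ, SR f (q:ℝ) = 0 → ¬(0 < fR f s ∧ (q:ℝ) < s) := by
    rw [ae_all_iff]
    intro q
    by_cases h : SR f (q:ℝ) = 0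
    · have h0 : ∫ x in Set.Ioi (q:ℝ), fR f x = 0 := h
      filter_upwards [ae_not_mem (null_inter hf_nonneg hint measurableSet_Ioi h0)] with s hs
      intro _ hcon
      exact hs ⟨hcon.1, hcon.2⟩
    · exact Eventually.of_forall fun s hq => absurd hq h
  have hC : ∀ᵐ s : ℝ, ∀ q : ℚ, ¬((q:ℝ) < s ∧ SR f s = SR f (q:ℝ) ∧ 0 < fR f s) := by
    rw [ae_all_iff]
    intro q
    exact ae_not_mem (C_null hf_nonneg hm hint q)
  have hEnlt : ∀ s, (b T < s ∧ 0 < fR f s ∧ 0 < SR f s ∧ b (1 / SR f s) ≠ s ∧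
      ∀ q : ℚ, (q:ℝ) < s → SR f (q:ℝ) ≠ SR f s) → s < b (1 / SR f s) ∧
        SR f (b (1 / SR f s)) = SR f s := by
    intro s hs
    obtain ⟨hs1, hs2, hs3, hs4, hs5⟩ := hs
    have hSRle : SR f s ≤ 1 / T := by
      have h := SR_anti hf_nonneg hint (le_of_lt hs1)
      rwa [hb_q T hT] at h
    have hTle : T ≤ 1 / SR f s := by
      have h2 := one_div_le_one_div_of_le hs3 hSRle
      rwa [one_div_one_div] at h2
    have hu1 : (1:ℝ) < 1 / SR f s := lt_of_lt_of_le hT hTle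
    have hSRb : SR f (b (1 / SR f s)) = SR f s := by
      rw [hb_q _ hu1, one_div_one_div]
    refine ⟨?_, hSRb⟩
    rcases hs4.lt_or_gt with hlt' | hlt'
    · exfalso
      obtain ⟨q, hq1, hq2⟩ := exists_rat_btwn hlt'
      apply hs5 q hq2
      have hA := SR_anti hf_nonneg hint hq1.le
      have hB := SR_anti hf_nonneg hint hq2.le
      rw [hSRb] at hA
      exact le_antisymm hA hB
    · exact hlt'
  filter_upwards [hIa, hE0, hD, hC,
    ae_not_mem (E_null hf_nonneg hint b (b T) hEnlt)] with s hInt hsE0 hsD hsC hsE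
  intro hsT
  have hg0 : 0 ≤ ∫ v in Set.Iic w, f s v :=
    setIntegral_nonneg measurableSet_Iic fun v _ => hf_nonneg s v
  have hgle : (∫ v in Set.Iic w, f s v) ≤ fR f s :=
    setIntegral_le_integral hInt (Eventually.of_forall fun v => hf_nonneg s v)
  rcases eq_or_lt_of_le (fR_nonneg hf_nonneg s) with hfR | hfR
  · rw [← hfR]
    have hg : (∫ v in Set.Iic w, f s v) = 0 := le_antisymm (hfR ▸ hgle) hg0
    simp [hg]
  · have hSRpos : 0 < SR f s := by
      rcases eq_or_lt_of_le (SR_nonneg hf_nonneg s) with h0 | h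
      · exfalso
        by_cases hq : ∃ q : ℚ, (q:ℝ) < s ∧ SR f (q:ℝ) = 0
        · obtain ⟨q, hq1, hq2⟩ := hq
          exact hsD q hq2 ⟨hfR, hq1⟩
        · push_neg at hq
          exact hsE0 ⟨h0.symm, fun q hq' => hq q hq'⟩
      · exact h
    have hbu : b (1 / SR f s) = s := by
      by_contra hne
      by_cases hq : ∃ q : ℚ, (q:ℝ) < s ∧ SR f (q:ℝ) = SR f s
      · obtain ⟨q, hq1, hq2⟩ := hq
        exact hsC q ⟨hq1, hq2.symm, hfR⟩
      · push_neg at hq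
        exact hsE ⟨hsT, hfR, hSRpos, hne, fun q hq' h' => hq q hq' h'⟩
    have hSRle : SR f s ≤ 1 / T := by
      have h := SR_anti hf_nonneg hint (le_of_lt hsT)
      rwa [hb_q T hT] at h
    have hTle : T ≤ 1 / SR f s := by
      have h2 := one_div_le_one_div_of_le hSRpos hSRle
      rwa [one_div_one_div] at h2
    have hcnd := hTc (1 / SR f s) hTle
    rw [hbu] at hcnd
    have hrw : (∫ v in Set.Iic w, f s v) - c * fR f s
        = (condP f w s - c) * fR f s := by
      rw [condP, sub_mul, div_mul_cancel₀ _ hfR.ne']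
    rw [hrw, abs_mul, abs_of_pos hfR]
    exact mul_le_mul_of_nonneg_right hcnd hfR.le


lemma gpTail_nonneg (l r : ℝ) : 0 ≤ gpTail l r := by
  unfold gpTail
  split_ifs
  · exact (Real.exp_pos _).le
  · exact Real.rpow_nonneg (le_max_right _ _) _

lemma gpTail_zero (l : ℝ) : gpTail l 0 = 1 := by
  unfold gpTail
  split_ifs
  · simp
  · norm_num

lemma g_int (hf_int : Integrable (Function.uncurry f)
      ((volume : Measure ℝ).prod (volume : Measure ℝ))) (w : ℝ) :
    Integrable (fun s => ∫ v in Set.Iic w, f s v) := by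
  have h1 : Integrable
      ((Set.univ ×ˢ Set.Iic w).indicator (Function.uncurry f))
      ((volume : Measure ℝ).prod (volume : Measure ℝ)) :=
    hf_int.indicator (MeasurableSet.univ.prod measurableSet_Iic)
  refine h1.integral_prod_left.congr (Eventually.of_forall fun s => ?_)
  have h2 : (fun v => (Set.univ ×ˢ Set.Iic w).indicator (Function.uncurry f) (s, v))
      = (Set.Iic w).indicator (f s) := by
    funext v
    by_cases hv : v ∈ Set.Iic w <;>
      simp [Function.uncurry, Set.indicator, hv]
  simp only [h2]
  rw [integral_indicator measurableSet_Iic]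

lemma keyL (hf_meas : Measurable (Function.uncurry f)) (hf_nonneg : ∀ r w, 0 ≤ f r w)
    (hf_int : Integrable (Function.uncurry f)
      ((volume : Measure ℝ).prod (volume : Measure ℝ)))
    (l : ℝ) (a b : ℝ → ℝ) (ha_pos : ∀ t : ℝ, 0 < a t)
    (hb_mono : StrictMonoOn b (Set.Ioi 1))
    (hb_q : ∀ t : ℝ, 1 < t → SR f (b t) = 1 / t)
    (hGP : ∀ r : ℝ, 0 ≤ r →
      Tendsto (fun t => SR f (a t * r + b t) / SR f (b t)) atTop (nhds (gpTail l r)))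
    (w c : ℝ) (hc : Tendsto (fun t => condP f w (b t)) atTop (nhds c))
    (r : ℝ) (hr : 0 ≤ r) :
    Tendsto (fun t => jointP f w (a t * r + b t) / SR f (b t)) atTop
      (nhds (c * gpTail l r)) := by
  have hgInt : Integrable (fun s => ∫ v in Set.Iic w, f s v) := g_int hf_int w
  have hint := fR_int hf_int
  set K := gpTail l r with hK
  have hK0 : 0 ≤ K := gpTail_nonneg l r
  have hG := hGP r hr
  rw [Metric.tendsto_atTop]
  intro δ hδ
  set ε := δ / (2 * (K + 1)) with hε
  have hεpos : 0 < ε := by positivity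
  obtain ⟨T0, hT0⟩ := Metric.tendsto_atTop.mp hc ε hεpos
  set T := max T0 2 with hT'
  have hT : 1 < T := lt_of_lt_of_le one_lt_two (le_max_right _ _)
  have hTc : ∀ u, T ≤ u → |condP f w (b u) - c| ≤ ε := fun u hu =>
    le_of_lt (by simpa [Real.dist_eq] using hT0 u (le_trans (le_max_left _ _) hu))
  have hA := lemA hf_meas hf_nonneg hf_int b hb_q w c ε T hT hTc
  set δ2 := min 1 (δ / (2 * (|c| + 1))) with hδ2
  have hδ2pos : 0 < δ2 := lt_min one_pos (by positivity)
  obtain ⟨N1, hN1⟩ := Metric.tendsto_atTop.mp hG δ2 hδ2pos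
  refine ⟨max T N1, fun t ht => ?_⟩
  have htT : T ≤ t := le_trans (le_max_left _ _) ht
  have ht1 : 1 < t := lt_of_lt_of_le hT htT
  have hd : SR f (b t) = 1 / t := hb_q t ht1
  have hdpos : 0 < SR f (b t) := by
    rw [hd]; positivity
  set x := a t * r + b t with hx
  have hbtx : b t ≤ x := by nlinarith [ha_pos t]
  have hbTbt : b T ≤ b t :=
    hb_mono.monotoneOn (Set.mem_Ioi.2 hT) (Set.mem_Ioi.2 ht1) htT
  have hbound : |jointP f w x - c * SR f x| ≤ ε * SR f x := by
    have hsub : jointP f w x - c * SR f x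
        = ∫ s in Set.Ioi x, ((∫ v in Set.Iic w, f s v) - c * fR f s) := by
      rw [integral_sub hgInt.integrableOn (hint.integrableOn.const_mul c),
        integral_const_mul]
      rfl
    rw [hsub]
    have h1 : |∫ s in Set.Ioi x, ((∫ v in Set.Iic w, f s v) - c * fR f s)|
        ≤ ∫ s in Set.Ioi x, |(∫ v in Set.Iic w, f s v) - c * fR f s| := by
      simpa [Real.norm_eq_abs] using
        norm_integral_le_integral_norm
          (μ := (volume : Measure ℝ).restrict (Set.Ioi x))
          (fun s => (∫ v in Set.Iic w, f s v) - c * fR f s)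
    refine le_trans h1 ?_
    have h2 : ∫ s in Set.Ioi x, |(∫ v in Set.Iic w, f s v) - c * fR f s|
        ≤ ∫ s in Set.Ioi x, ε * fR f s := by
      refine integral_mono_ae
        ((hgInt.integrableOn.sub (hint.integrableOn.const_mul c)).abs)
        (hint.integrableOn.const_mul ε) ?_
      have hmem : ∀ᵐ s ∂(volume : Measure ℝ).restrict (Set.Ioi x), s ∈ Set.Ioi x :=
        ae_restrict_mem measurableSet_Ioi
      filter_upwards [hmem, ae_restrict_of_ae hA] with s h1' h2'
      exact h2' (lt_of_le_of_lt (le_trans hbTbt hbtx) h1')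
    refine le_trans h2 (le_of_eq ?_)
    rw [integral_const_mul]
    rfl
  set G := SR f x / SR f (b t) with hG'
  have hGt : |G - K| < δ2 := by
    have := hN1 t (le_trans (le_max_right _ _) ht)
    rw [Real.dist_eq] at this
    exact this
  have hGnn : 0 ≤ G := div_nonneg (SR_nonneg hf_nonneg x) hdpos.le
  have hF : |jointP f w x / SR f (b t) - c * G| ≤ ε * G := by
    have e1 : jointP f w x / SR f (b t) - c * G
        = (jointP f w x - c * SR f x) / SR f (b t) := by
      rw [hG']; field_simp
    rw [e1, abs_div, abs_of_pos hdpos, hG', ← mul_div_assoc]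
    gcongr
  rw [Real.dist_eq]
  have hGle : G ≤ K + 1 := by
    have h5 := abs_lt.mp hGt
    have h6 : δ2 ≤ 1 := min_le_left _ _
    linarith [h5.2]
  have h3 : ε * G ≤ δ / 2 := by
    have : ε * G ≤ ε * (K + 1) := mul_le_mul_of_nonneg_left hGle hεpos.le
    have heq : ε * (K + 1) = δ / 2 := by
      rw [hε]; field_simp
    linarith
  have h4 : |c| * |G - K| < δ / 2 := by
    have h5 : |c| * |G - K| ≤ |c| * (δ / (2 * (|c| + 1))) :=
      mul_le_mul_of_nonneg_left
        (le_of_lt (lt_of_lt_of_le hGt (min_le_right _ _))) (abs_nonneg c)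
    have h6 : |c| * (δ / (2 * (|c| + 1))) < δ / 2 := by
      rw [show |c| * (δ / (2 * (|c| + 1))) = |c| * δ / (2 * (|c| + 1)) from
        (mul_div_assoc _ _ _).symm,
        div_lt_div_iff₀ (by positivity) (by norm_num : (0:ℝ) < 2)]
      nlinarith [abs_nonneg c]
    exact lt_of_le_of_lt h5 h6
  have h7 : |jointP f w x / SR f (b t) - c * K| ≤ ε * G + |c| * |G - K| := by
    have e2 : jointP f w x / SR f (b t) - c * K
        = (jointP f w x / SR f (b t) - c * G) + c * (G - K) := by ring
    rw [e2]
    refine le_trans (abs_add_le _ _) ?_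
    rw [abs_mul]
    exact add_le_add_left hF _
  linarith

/-- Proposition in Appendix A.1: for `(W, R)` with a joint
density, `W` valued in `[0,1]`, `R` in the GP domain of attraction with shape
`λ` and normalisation `a(t) > 0`, `b(t) = F_R^{−1}(1 − 1/t)`, and assuming the
conditional limits exist, for any distribution function `J` on `[0,1]`:
`P{W ≤ w, R > a(t)r + b(t) | R > b(t)} → J(w) K̄(r)` for all `w ∈ [0,1]`,
`r ≥ 0`, if and only if `P{W ≤ w | R = b(t)} → J(w)` for all `w ∈ [0,1]`. -/
theorem stmt13 (f : ℝ → ℝ → ℝ)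
    -- `f` is a joint Lebesgue density of `(R, W)` ...
    (hf_meas : Measurable (Function.uncurry f))
    (hf_nonneg : ∀ r w, 0 ≤ f r w)
    (hf_int : Integrable (Function.uncurry f)
      ((volume : Measure ℝ).prod (volume : Measure ℝ)))
    (hf_one : ∫ p : ℝ × ℝ, Function.uncurry f p
        ∂((volume : Measure ℝ).prod (volume : Measure ℝ)) = 1)
    -- ... with `W` taking values in `[0,1]`
    (hf_supp : ∀ r w : ℝ, w ∉ Set.Icc (0:ℝ) 1 → f r w = 0)
    (l : ℝ) (a b : ℝ → ℝ)
    (ha_pos : ∀ t : ℝ, 0 < a t)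
    -- `b(t)` is the `1 − 1/t` quantile of `R`, strictly increasing in `t`
    (hb_mono : StrictMonoOn b (Set.Ioi 1))
    (hb_q : ∀ t : ℝ, 1 < t → SR f (b t) = 1 / t)
    -- `R` lies in the GP domain of attraction with shape `λ`:
    (hGP : ∀ r : ℝ, 0 ≤ r →
      Tendsto (fun t => SR f (a t * r + b t) / SR f (b t)) atTop
        (nhds (gpTail l r)))
    -- the conditional limits exist:
    (hcond : ∀ w ∈ Set.Icc (0:ℝ) 1,
      ∃ cw : ℝ, Tendsto (fun t => condP f w (b t)) atTop (nhds cw)) :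
    ∀ J : ℝ → ℝ, MonotoneOn J (Set.Icc (0:ℝ) 1) →
      ((∀ w ∈ Set.Icc (0:ℝ) 1, ∀ r : ℝ, 0 ≤ r →
          Tendsto (fun t => jointP f w (a t * r + b t) / SR f (b t)) atTop
            (nhds (J w * gpTail l r))) ↔
        (∀ w ∈ Set.Icc (0:ℝ) 1,
          Tendsto (fun t => condP f w (b t)) atTop (nhds (J w)))) := by
  intro J _hJ
  constructor
  · intro hjoint w hw
    obtain ⟨c, hc⟩ := hcond w hw
    have h1 := keyL hf_meas hf_nonneg hf_int l a b ha_pos hb_mono hb_q hGP w c hc 0 le_rfl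
    have h2 := hjoint w hw 0 le_rfl
    have h3 : c * gpTail l 0 = J w * gpTail l 0 := tendsto_nhds_unique h1 h2
    rw [gpTail_zero] at h3
    simp only [mul_one] at h3
    rwa [← h3]
  · intro hcondJ w hw r hr
    exact keyL hf_meas hf_nonneg hf_int l a b ha_pos hb_mono hb_q hGP w (J w)
      (hcondJ w hw) r hr
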